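/- Let n ∈ ℕ, p ∈ [0,1]^n, and let f : {0,1}^n → ℝ be monotone and 1-Lipschitz. Define F(λ) = ∫ e^{λ f(x)} dμ_{e^{-λ}p}(x) and φ(x) = e^x − x − 1. Then for every λ ∈ (0,1], the derivative of F at λ satisfies F'(λ) ≤ ∫ f(x) e^{λ f(x)} dμ_{e^{-λ}p}(x) − (1/λ) · Σ_{i=1}^{n} ∫ e^{λ f(x)} · φ( −λ ( f(x) − f(x_{i←0}) ) ) dμ_{e^{-λ}p}(x). -/

import Mathlib

open MeasureTheory

/-- The Bernoulli measure on `Bool` with parameter `q`. -/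
noncomputable def bernoulliMeasure (q : ℝ) : Measure Bool :=
  (ENNReal.ofReal q) • Measure.dirac true + (ENNReal.ofReal (1 - q)) • Measure.dirac false

/-- The product Bernoulli measure `μ_p` on `{0,1}^n`. -/
noncomputable def productBernoulli {n : ℕ} (p : Fin n → ℝ) : Measure (Fin n → Bool) :=
  Measure.pi fun i => bernoulliMeasure (p i)

/-- `f` is 1-Lipschitz with respect to the Hamming distance on `{0,1}^n`. -/
def OneLipschitz {n : ℕ} (f : (Fin n → Bool) → ℝ) : Prop :=
  ∀ x y : Fin n → Bool,
    |f x - f y| ≤ (Finset.univ.filter fun i => x i ≠ y i).card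

/-- `φ(x) = eˣ − x − 1`. -/
noncomputable def phi (x : ℝ) : ℝ := Real.exp x - x - 1

noncomputable def bw (q : ℝ) (b : Bool) : ℝ := if b then q else 1 - q

lemma bw_nonneg {q : ℝ} (hq : q ∈ Set.Icc (0:ℝ) 1) (b : Bool) : 0 ≤ bw q b := by
  cases b <;> simp [bw] <;> [linarith [hq.2]; exact hq.1]

lemma bernoulli_singleton (q : ℝ) (b : Bool) :
    bernoulliMeasure q {b} = ENNReal.ofReal (bw q b) := by
  cases b <;> simp [bernoulliMeasure, bw, Measure.dirac_apply' _ (measurableSet_singleton _)]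

lemma bernoulli_prob {q : ℝ} (hq : q ∈ Set.Icc (0:ℝ) 1) :
    IsProbabilityMeasure (bernoulliMeasure q) := by
  constructor
  simp [bernoulliMeasure]
  rw [← ENNReal.ofReal_add hq.1 (by linarith [hq.2])]
  simp

lemma integral_pb {n : ℕ} (q : Fin n → ℝ) (hq : ∀ i, q i ∈ Set.Icc (0:ℝ) 1)
    (g : (Fin n → Bool) → ℝ) :
    ∫ x, g x ∂(productBernoulli q) = ∑ x, (∏ i, bw (q i) (x i)) * g x := by
  haveI : ∀ i, IsProbabilityMeasure (bernoulliMeasure (q i)) := fun i => bernoulli_prob (hq i)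
  haveI : IsProbabilityMeasure (productBernoulli q) := by
    unfold productBernoulli; infer_instance
  rw [integral_fintype .of_finite]
  refine Finset.sum_congr rfl fun x _ => ?_
  have : productBernoulli q {x} = ENNReal.ofReal (∏ i, bw (q i) (x i)) := by
    rw [show ({x} : Set (Fin n → Bool)) = Set.univ.pi (fun i => {x i}) by
      ext y; simp [funext_iff, Set.mem_pi]]
    rw [productBernoulli, Measure.pi_pi]
    rw [ENNReal.ofReal_prod_of_nonneg (fun i _ => bw_nonneg (hq i) _)]
    exact Finset.prod_congr rfl fun i _ => bernoulli_singleton _ _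
  rw [Measure.real, this, ENNReal.toReal_ofReal (Finset.prod_nonneg fun i _ => bw_nonneg (hq i) _),
    smul_eq_mul]

lemma core_ineq {l f0 f1 : ℝ} (hl0 : 0 < l) (hl1 : l ≤ 1) (h01 : f0 ≤ f1)
    (hd : f1 - f0 ≤ 1) :
    Real.exp (l * f0) - Real.exp (l * f1) ≤
      -(1/l) * (Real.exp (l * f1) * phi (-(l * (f1 - f0)))) := by
  set u := l * (f1 - f0) with hu
  have hu0 : 0 ≤ u := mul_nonneg hl0.le (by linarith)
  have hul : u ≤ l := by nlinarith
  have h2 : Real.exp (-u) * (1 + u) ≤ 1 := by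
    have h := Real.add_one_le_exp u
    have : Real.exp (-u) * (1 + u) ≤ Real.exp (-u) * Real.exp u := by
      have := (Real.exp_pos (-u)).le
      nlinarith
    rwa [← Real.exp_add, neg_add_cancel, Real.exp_zero] at this
  have h3 : Real.exp (-u) ≤ 1 := Real.exp_le_one_iff.mpr (by linarith)
  have h4 : (1/l) * phi (-u) ≤ 1 - Real.exp (-u) := by
    rw [div_mul_eq_mul_div, one_mul, div_le_iff₀ hl0]
    unfold phi; nlinarith
  have hE : Real.exp (l * f0) = Real.exp (l * f1) * Real.exp (-u) := by
    rw [← Real.exp_add, hu]; ring_nf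
  have hpos := (Real.exp_pos (l * f1)).le
  rw [hE]
  nlinarith [mul_le_mul_of_nonneg_left h4 hpos]

/-- Upper bound on the derivative of `F(λ) = ∫ e^{λ f} dμ_{e^{-λ}p}` for monotone
1-Lipschitz `f` and `λ ∈ (0,1]`:
`F'(λ) ≤ E[Z^{(λ)} e^{λ Z^{(λ)}}] − (1/λ) Σᵢ E[e^{λ Z^{(λ)}} φ(−λ(Z^{(λ)} − Zᵢ^{(λ)}))]`. -/
theorem deriv_upper_bound {n : ℕ} (p : Fin n → ℝ)
    (hp : ∀ i, p i ∈ Set.Icc (0 : ℝ) 1)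
    (f : (Fin n → Bool) → ℝ) (hf_mono : Monotone f) (hf_lip : OneLipschitz f)
    (F : ℝ → ℝ)
    (hF : F = fun l =>
      ∫ x, Real.exp (l * f x) ∂(productBernoulli (fun i => Real.exp (-l) * p i)))
    (l : ℝ) (hl : l ∈ Set.Ioc (0 : ℝ) 1) :
    deriv F l ≤
      (∫ x, f x * Real.exp (l * f x)
          ∂(productBernoulli (fun i => Real.exp (-l) * p i))) -
        (1 / l) *
          ∑ i : Fin n,
            ∫ x, Real.exp (l * f x) * phi (-(l * (f x - f (Function.update x i false))))
              ∂(productBernoulli (fun i => Real.exp (-l) * p i)) := by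
  obtain ⟨hl0, hl1⟩ := hl
  -- scaled parameters are in [0,1] for positive time
  have hq : ∀ s : ℝ, 0 < s → ∀ i, Real.exp (-s) * p i ∈ Set.Icc (0:ℝ) 1 := by
    intro s hs i
    have h1 : Real.exp (-s) ≤ 1 := Real.exp_le_one_iff.mpr (by linarith)
    have h0 := (Real.exp_pos (-s)).le
    exact ⟨mul_nonneg h0 (hp i).1,
      le_trans (mul_le_mul h1 (hp i).2 (hp i).1 zero_le_one) (by norm_num)⟩
  set G : ℝ → ℝ := fun s => ∑ x : Fin n → Bool,
      (∏ i, bw (Real.exp (-s) * p i) (x i)) * Real.exp (s * f x) with hG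
  have hFG : ∀ s ∈ Set.Ioi (0:ℝ), F s = G s := by
    intro s hs
    rw [hF, hG]
    exact integral_pb _ (hq s hs) _
  -- derivative of each weight factor
  have hfac : ∀ (x : Fin n → Bool) (i : Fin n),
      HasDerivAt (fun s => bw (Real.exp (-s) * p i) (x i))
        ((if x i then -(Real.exp (-l) * p i) else Real.exp (-l) * p i)) l := by
    intro x i
    have hexp : HasDerivAt (fun s : ℝ => Real.exp (-s) * p i) (-(Real.exp (-l) * p i)) l := by
      have := ((hasDerivAt_neg l).exp).mul_const (p i)
      rw [show -(Real.exp (-l) * p i) = Real.exp (-l) * -1 * p i by ring]; exact this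
    cases hxi : x i
    · simp only [bw, if_false, Bool.false_eq_true]
      simpa using hexp.const_sub 1
    · simp only [bw, if_true]
      exact hexp
  have hGD : HasDerivAt G
      (∑ x : Fin n → Bool,
        ((∑ i, (∏ j ∈ Finset.univ.erase i, bw (Real.exp (-l) * p j) (x j)) •
            (if x i then -(Real.exp (-l) * p i) else Real.exp (-l) * p i)) *
            Real.exp (l * f x)
          + (∏ i, bw (Real.exp (-l) * p i) (x i)) * (f x * Real.exp (l * f x)))) l := by
    apply HasDerivAt.fun_sum
    intro x _
    have hprod := HasDerivAt.fun_finsetProd (u := Finset.univ)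
      (f := fun i s => bw (Real.exp (-s) * p i) (x i))
      (f' := fun i => (if x i then -(Real.exp (-l) * p i) else Real.exp (-l) * p i))
      (fun i _ => hfac x i)
    have hex : HasDerivAt (fun s => Real.exp (s * f x)) (f x * Real.exp (l * f x)) l := by
      have := ((hasDerivAt_id l).mul_const (f x)).exp
      simp only [id_eq] at this
      convert this using 1 <;> ring
    exact hprod.mul hex
  have hderiv : deriv F l =
      ∑ x : Fin n → Bool,
        ((∑ i, (∏ j ∈ Finset.univ.erase i, bw (Real.exp (-l) * p j) (x j)) •
            (if x i then -(Real.exp (-l) * p i) else Real.exp (-l) * p i)) *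
            Real.exp (l * f x)
          + (∏ i, bw (Real.exp (-l) * p i) (x i)) * (f x * Real.exp (l * f x))) := by
    have hev : F =ᶠ[nhds l] G :=
      Filter.eventuallyEq_of_mem (isOpen_Ioi.mem_nhds hl0) hFG
    rw [hev.deriv_eq, hGD.deriv]
  rw [hderiv]
  simp only [integral_pb _ (hq l hl0)]
  rw [Finset.sum_add_distrib]
  have key : (∑ x : Fin n → Bool,
        (∑ i, (∏ j ∈ Finset.univ.erase i, bw (Real.exp (-l) * p j) (x j)) •
            (if x i then -(Real.exp (-l) * p i) else Real.exp (-l) * p i)) *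
            Real.exp (l * f x)) ≤
      -((1 / l) * ∑ i : Fin n, ∑ x : Fin n → Bool,
          (∏ j, bw (Real.exp (-l) * p j) (x j)) *
            (Real.exp (l * f x) * phi (-(l * (f x - f (Function.update x i false)))))) := by
    simp only [smul_eq_mul, Finset.sum_mul]
    rw [Finset.sum_comm, Finset.mul_sum, ← Finset.sum_neg_distrib]
    apply Finset.sum_le_sum
    intro i _
    set q : Fin n → ℝ := fun j => Real.exp (-l) * p j with hqdef
    set A : (Fin n → Bool) → ℝ := fun x =>
      (∏ j ∈ Finset.univ.erase i, bw (q j) (x j)) *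
        (if x i then -(q i) else q i) * Real.exp (l * f x) with hA
    set R : (Fin n → Bool) → ℝ := fun x =>
      (∏ j, bw (q j) (x j)) *
        (Real.exp (l * f x) * phi (-(l * (f x - f (Function.update x i false))))) with hR
    show ∑ x, A x ≤ -((1 / l) * ∑ x, R x)
    have hRzero : ∀ x : Fin n → Bool, ¬(x i = true) → R x = 0 := by
      intro x hx
      have hupd : Function.update x i false = x := by
        funext j
        rcases eq_or_ne j i with rfl | hj
        · simp [Bool.eq_false_iff.mpr, Bool.not_eq_true] at hx ⊢
          simp [hx]
        · simp [Function.update_of_ne hj]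
      simp [hR, hupd, phi]
    have hpair : ∀ x ∈ Finset.univ.filter (fun x : Fin n → Bool => x i = true),
        A x + A (Function.update x i false) ≤ -((1 / l) * R x) := by
      intro x hx
      rw [Finset.mem_filter] at hx
      have hxi := hx.2
      have hPeq : (∏ j ∈ Finset.univ.erase i, bw (q j) ((Function.update x i false) j)) =
          ∏ j ∈ Finset.univ.erase i, bw (q j) (x j) := by
        refine Finset.prod_congr rfl fun j hj => ?_
        rw [Function.update_of_ne (Finset.ne_of_mem_erase hj)]
      set P : ℝ := ∏ j ∈ Finset.univ.erase i, bw (q j) (x j) with hP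
      have hPnn : 0 ≤ P :=
        Finset.prod_nonneg fun j _ => bw_nonneg (hq l hl0 j) _
      have hqnn : 0 ≤ q i := (hq l hl0 i).1
      have hWx : (∏ j, bw (q j) (x j)) = q i * P := by
        rw [← Finset.mul_prod_erase Finset.univ _ (Finset.mem_univ i), hxi]
        rfl
      have hle : Function.update x i false ≤ x := by
        intro j
        rcases eq_or_ne j i with rfl | hj
        · simp [Function.update_self]
        · simp [Function.update_of_ne hj]
      have h01 : f (Function.update x i false) ≤ f x := hf_mono hle
      have hd : f x - f (Function.update x i false) ≤ 1 := by
        have hlip := hf_lip x (Function.update x i false)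
        have hsub : (Finset.univ.filter fun j => x j ≠ (Function.update x i false) j) ⊆ {i} := by
          intro j hj
          rw [Finset.mem_filter] at hj
          rw [Finset.mem_singleton]
          by_contra hji
          exact hj.2 (Function.update_of_ne hji _ _).symm
        have hcard := Finset.card_le_card hsub
        rw [Finset.card_singleton] at hcard
        have : |f x - f (Function.update x i false)| ≤ 1 := by
          refine hlip.trans ?_
          exact_mod_cast hcard
        linarith [le_abs_self (f x - f (Function.update x i false))]
      have hcore := core_ineq hl0 hl1 h01 hd
      have hmul := mul_le_mul_of_nonneg_left hcore (mul_nonneg hqnn hPnn)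
      have hupdi : (Function.update x i false) i = false := Function.update_self i false x
      simp only [hA, hR, hWx, hPeq, hxi, hupdi, if_true, Bool.false_eq_true, if_false]
      nlinarith [hmul]
    calc ∑ x, A x
        = (∑ x ∈ Finset.univ.filter (fun x : Fin n → Bool => x i = true), A x) +
            ∑ x ∈ Finset.univ.filter (fun x : Fin n → Bool => ¬(x i = true)), A x := by
          rw [Finset.sum_filter_add_sum_filter_not]
      _ = ∑ x ∈ Finset.univ.filter (fun x : Fin n → Bool => x i = true),
            (A x + A (Function.update x i false)) := by
          rw [Finset.sum_add_distrib]
          congr 1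
          refine Finset.sum_nbij' (fun x => Function.update x i true)
            (fun x => Function.update x i false) ?_ ?_ ?_ ?_ ?_
          · intro a ha; simp
          · intro a ha; simp
          · intro a ha
            rw [Finset.mem_filter] at ha
            funext j
            rcases eq_or_ne j i with rfl | hj
            · simp [Bool.not_eq_true] at ha
              simp [ha]
            · simp [Function.update_of_ne hj]
          · intro a ha
            rw [Finset.mem_filter] at ha
            funext j
            rcases eq_or_ne j i with rfl | hj
            · simp [ha.2]
            · simp [Function.update_of_ne hj]
          · intro a ha
            congr 1
            funext j
            rcases eq_or_ne j i with rfl | hj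
            · rw [Finset.mem_filter] at ha
              simp [Bool.not_eq_true] at ha
              simp [ha]
            · simp [Function.update_of_ne hj]
      _ ≤ ∑ x ∈ Finset.univ.filter (fun x : Fin n → Bool => x i = true),
            -((1 / l) * R x) := Finset.sum_le_sum hpair
      _ = ∑ x, -((1 / l) * R x) := by
          rw [← Finset.sum_filter_add_sum_filter_not Finset.univ
            (fun x : Fin n → Bool => x i = true) (fun x => -((1 / l) * R x))]
          have : ∑ x ∈ Finset.univ.filter (fun x : Fin n → Bool => ¬(x i = true)),
              -((1 / l) * R x) = 0 := by
            refine Finset.sum_eq_zero fun x hx => ?_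
            rw [Finset.mem_filter] at hx
            rw [hRzero x hx.2]
            ring
          rw [this, add_zero]
      _ = -((1 / l) * ∑ x, R x) := by
          rw [Finset.mul_sum, Finset.sum_neg_distrib]
  linarith [key]
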